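/- arXiv:1110.2841 — 2 statements merged into one kernel-verified Lean document; each statement's English description precedes it below -/
import Mathlib

section
/- Let G be a finite simple graph, let (v, w) be an edge of G, and suppose N(v) \ {w} ⊆ N(w). Then γ(G) ≤ γ(G − w) and i(G) ≤ i(G − w). -/
/-- `A` is a dominating set: every vertex outside `A` has a neighbor in `A`. -/
def IsDominatingSet {V : Type} (G : SimpleGraph V) (A : Set V) : Prop :=
  ∀ v ∉ A, ∃ a ∈ A, G.Adj v a

/-- A set of vertices is independent if no two of its vertices are adjacent. -/
def IsIndepSet {V : Type} (G : SimpleGraph V) (A : Set V) : Prop :=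
  ∀ u ∈ A, ∀ v ∈ A, ¬ G.Adj u v

/-- `γ(G)`: the minimum size of a dominating set. -/
noncomputable def domNum {V : Type} (G : SimpleGraph V) : ℕ :=
  sInf {n | ∃ A : Set V, IsDominatingSet G A ∧ A.ncard = n}

/-- `i(G)`: the minimum size of an independent dominating set. -/
noncomputable def indDomNum {V : Type} (G : SimpleGraph V) : ℕ :=
  sInf {n | ∃ A : Set V, IsDominatingSet G A ∧ IsIndepSet G A ∧ A.ncard = n}

/-- `γ₀(X, G)`: the minimum size of a set `A` with `X ⊆ N(A)`. -/
noncomputable def gamma0Of {V : Type} (G : SimpleGraph V) (X : Set V) : ℕ :=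
  sInf {n | ∃ A : Set V, (∀ x ∈ X, ∃ a ∈ A, G.Adj x a) ∧ A.ncard = n}

/-- `γ₀(G) = γ₀(V(G), G)`. -/
noncomputable def gamma0 {V : Type} (G : SimpleGraph V) : ℕ :=
  gamma0Of G Set.univ

/-- `τ(G)`: the maximum of `γ₀(A, G)` over independent sets `A`. -/
noncomputable def tauNum {V : Type} (G : SimpleGraph V) : ℕ :=
  sSup {n | ∃ A : Set V, IsIndepSet G A ∧ gamma0Of G A = n}

/-- A set `F` of edges of `G` is edgewise dominant if every vertex of `G` is adjacent
to an endpoint of some edge in `F`. -/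
def IsEdgewiseDominant {V : Type} (G : SimpleGraph V) (F : Set (Sym2 V)) : Prop :=
  F ⊆ G.edgeSet ∧ ∀ v : V, ∃ e ∈ F, ∃ w, w ∈ e ∧ G.Adj v w

/-- `ε(G)`: the minimum size of an edgewise dominant set of edges. -/
noncomputable def epsilonNum {V : Type} (G : SimpleGraph V) : ℕ :=
  sInf {n | ∃ F : Set (Sym2 V), IsEdgewiseDominant G F ∧ F.ncard = n}

lemma exists_indep_dom {V : Type} [Finite V] (G : SimpleGraph V) :
    ∃ A : Set V, IsDominatingSet G A ∧ IsIndepSet G A := by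
  classical
  have : Fintype V := Fintype.ofFinite V
  set F := Finset.univ.powerset.filter (fun s : Finset V => IsIndepSet G ↑s) with hF
  have hne : F.Nonempty := ⟨∅, by simp [hF, IsIndepSet]⟩
  obtain ⟨s, hs, hmax⟩ := F.exists_max_image Finset.card hne
  have hsi : IsIndepSet G ↑s := (Finset.mem_filter.mp hs).2
  refine ⟨↑s, ?_, hsi⟩
  intro u hu
  by_contra h
  push_neg at h
  have hins : insert u s ∈ F := by
    refine Finset.mem_filter.mpr ⟨by simp, ?_⟩
    intro x hx y hy hadj
    simp only [Finset.coe_insert, Set.mem_insert_iff] at hx hy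
    rcases hx with rfl | hx
    · rcases hy with rfl | hy
      · exact hadj.ne rfl
      · exact h y hy hadj
    · rcases hy with rfl | hy
      · exact h x hx hadj.symm
      · exact hsi x hx y hy hadj
  have h1 := hmax _ hins
  have h2 : s.card + 1 ≤ s.card := by
    rwa [Finset.card_insert_of_notMem (fun hus => hu hus)] at h1
  omega

lemma key_dom {V : Type} (G : SimpleGraph V) (v w : V) (hvw : G.Adj v w)
    (hsub : G.neighborSet v \ {w} ⊆ G.neighborSet w)
    (A : Set ({w}ᶜ : Set V)) (hA : IsDominatingSet (G.induce ({w}ᶜ : Set V)) A) :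
    IsDominatingSet G (Subtype.val '' A) := by
  intro u hu
  by_cases huw : u = w
  · subst huw
    have hvu : v ≠ u := hvw.ne
    set v' : ({u}ᶜ : Set V) := ⟨v, by simpa using hvu⟩ with hv'
    by_cases hvA : v' ∈ A
    · exact ⟨v, ⟨v', hvA, rfl⟩, hvw.symm⟩
    · obtain ⟨a, haA, hadj⟩ := hA v' hvA
      have haw : (a : V) ≠ u := fun h => a.2 (Set.mem_singleton_iff.mpr h)
      have hmem : (a : V) ∈ G.neighborSet v \ {u} := ⟨hadj, by simpa using haw⟩
      exact ⟨a, ⟨a, haA, rfl⟩, hsub hmem⟩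
  · set u' : ({w}ᶜ : Set V) := ⟨u, by simpa using huw⟩ with hu'
    have huA : u' ∉ A := fun h => hu ⟨u', h, rfl⟩
    obtain ⟨a, haA, hadj⟩ := hA u' huA
    exact ⟨a, ⟨a, haA, rfl⟩, hadj⟩

lemma key_indep {V : Type} (G : SimpleGraph V) (w : V)
    (A : Set ({w}ᶜ : Set V)) (hA : IsIndepSet (G.induce ({w}ᶜ : Set V)) A) :
    IsIndepSet G (Subtype.val '' A) := by
  rintro x ⟨x', hx', rfl⟩ y ⟨y', hy', rfl⟩ hadj
  exact hA x' hx' y' hy' hadj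

theorem stmt17 {V : Type} [Fintype V] (G : SimpleGraph V) (v w : V) (hvw : G.Adj v w)
    (hsub : G.neighborSet v \ {w} ⊆ G.neighborSet w) :
    domNum G ≤ domNum (G.induce ({w}ᶜ : Set V)) ∧
      indDomNum G ≤ indDomNum (G.induce ({w}ᶜ : Set V)) := by
  constructor
  · have hne : {n | ∃ A : Set ({w}ᶜ : Set V),
        IsDominatingSet (G.induce ({w}ᶜ : Set V)) A ∧ A.ncard = n}.Nonempty :=
      ⟨(Set.univ : Set ({w}ᶜ : Set V)).ncard, Set.univ,
        fun x hx => absurd (Set.mem_univ x) hx, rfl⟩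
    obtain ⟨A, hA, hcard⟩ := Nat.sInf_mem hne
    refine Nat.sInf_le ⟨Subtype.val '' A, key_dom G v w hvw hsub A hA, ?_⟩
    rw [Set.ncard_image_of_injective A Subtype.val_injective]
    exact hcard
  · have hne : {n | ∃ A : Set ({w}ᶜ : Set V),
        IsDominatingSet (G.induce ({w}ᶜ : Set V)) A ∧
          IsIndepSet (G.induce ({w}ᶜ : Set V)) A ∧ A.ncard = n}.Nonempty := by
      obtain ⟨A, hAd, hAi⟩ := exists_indep_dom (G.induce ({w}ᶜ : Set V))
      exact ⟨A.ncard, A, hAd, hAi, rfl⟩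
    obtain ⟨A, hAd, hAi, hcard⟩ := Nat.sInf_mem hne
    refine Nat.sInf_le ⟨Subtype.val '' A, key_dom G v w hvw hsub A hAd,
      key_indep G w A hAi, ?_⟩
    rw [Set.ncard_image_of_injective A Subtype.val_injective]
    exact hcard
end

section
/- Let G be a long finite simple graph, i.e., a graph in which the set {x ∈ V(G) : deg(x) > 2} is independent. Then i(G) = γ(G). -/
def badSet {V : Type} (G : SimpleGraph V) (A : Set V) : Set (V × V) :=
  {p : V × V | p.1 ∈ A ∧ p.2 ∈ A ∧ G.Adj p.1 p.2}

lemma core {V : Type} [Fintype V] (G : SimpleGraph V) (D : Set V)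
    (hD : IsDominatingSet G D)
    (hmin : ∀ A : Set V, IsDominatingSet G A → D.ncard ≤ A.ncard)
    (hbad : ∀ A : Set V, IsDominatingSet G A → A.ncard = D.ncard →
      (badSet G D).ncard ≤ (badSet G A).ncard)
    (u v : V) (hu : u ∈ D) (hv : v ∈ D) (huv : G.Adj u v)
    (hdeg : (G.neighborSet u).ncard ≤ 2) : False := by
  by_cases hc : ∀ x, x ∉ D → G.Adj x u → ∃ a ∈ D, a ≠ u ∧ G.Adj x a
  · have hdom : IsDominatingSet G (D \ {u}) := by
      intro x hx
      by_cases hxu : x = u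
      · exact ⟨v, ⟨hv, huv.ne'⟩, hxu ▸ huv⟩
      · have hxD : x ∉ D := fun h => hx ⟨h, hxu⟩
        obtain ⟨a, haD, hxa⟩ := hD x hxD
        by_cases hau : a = u
        · obtain ⟨b, hbD, hbu, hxb⟩ := hc x hxD (hau ▸ hxa)
          exact ⟨b, ⟨hbD, hbu⟩, hxb⟩
        · exact ⟨a, ⟨haD, hau⟩, hxa⟩
    have := hmin _ hdom
    have hlt : (D \ {u}).ncard < D.ncard :=
      Set.ncard_diff_singleton_lt_of_mem hu (Set.toFinite D)
    omega
  · push_neg at hc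
    obtain ⟨w, hwD, hwu, hwpriv⟩ := hc
    have hwv : w ≠ v := fun h => hwD (h ▸ hv)
    have hNu : G.neighborSet u = {v, w} := by
      have hsub : ({v, w} : Set V) ⊆ G.neighborSet u := by
        intro x hx
        rcases hx with h | h
        · exact h ▸ huv
        · exact h ▸ hwu.symm
      have h2 : ({v, w} : Set V).ncard = 2 := Set.ncard_pair (Ne.symm hwv)
      exact (Set.eq_of_subset_of_ncard_le hsub (h2 ▸ hdeg)
        (Set.toFinite _)).symm
    set D' : Set V := insert w (D \ {u}) with hD'def
    have hwD' : w ∉ D \ {u} := fun h => hwD h.1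
    have hdom : IsDominatingSet G D' := by
      intro x hx
      have hxw : x ≠ w := fun h => hx (h ▸ Set.mem_insert w _)
      by_cases hxu : x = u
      · exact ⟨v, Set.mem_insert_of_mem _ ⟨hv, huv.ne'⟩, hxu ▸ huv⟩
      · have hxD : x ∉ D := fun h => hx (Set.mem_insert_of_mem _ ⟨h, hxu⟩)
        obtain ⟨a, haD, hxa⟩ := hD x hxD
        by_cases hau : a = u
        · have : x ∈ G.neighborSet u := (hau ▸ hxa).symm
          rw [hNu] at this
          rcases this with h | h
          · exact (hxD (h ▸ hv)).elim
          · exact (hxw h).elim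
        · exact ⟨a, Set.mem_insert_of_mem _ ⟨haD, hau⟩, hxa⟩
    have hcard : D'.ncard = D.ncard := by
      rw [hD'def, Set.ncard_insert_of_notMem hwD' (Set.toFinite _),
        Set.ncard_diff_singleton_of_mem hu]
      have : 0 < D.ncard := (Set.ncard_pos (Set.toFinite D)).2 ⟨u, hu⟩
      omega
    have hssub : badSet G D' ⊂ badSet G D := by
      constructor
      · rintro ⟨a, b⟩ ⟨ha, hb, hab⟩
        have key : ∀ c, c ∈ D' → ¬ G.Adj w c := by
          intro c hc hwc
          rcases hc with h | h
          · exact G.loopless.irrefl w (h ▸ hwc)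
          · exact (hwpriv c h.1 h.2) hwc
        have haw : a ≠ w := fun h => key b hb (h ▸ hab)
        have hbw : b ≠ w := fun h => key a ha (h ▸ hab.symm)
        have haD : a ∈ D := by
          rcases ha with h | h
          · exact absurd h haw
          · exact h.1
        have hbD : b ∈ D := by
          rcases hb with h | h
          · exact absurd h hbw
          · exact h.1
        exact ⟨haD, hbD, hab⟩
      · intro hsub
        have : (u, v) ∈ badSet G D' := hsub ⟨hu, hv, huv⟩
        rcases this.1 with h | h
        · exact hwD (h ▸ hu)
        · exact h.2 rfl
    have := hbad D' hdom hcard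
    have hlt : (badSet G D').ncard < (badSet G D).ncard :=
      Set.ncard_lt_ncard hssub (Set.toFinite _)
    omega


/-- For a long graph (the vertices of degree greater than 2 form an independent set),
the independent domination number equals the domination number. -/
theorem stmt19 {V : Type} [Fintype V] (G : SimpleGraph V)
    (hlong : IsIndepSet G {x : V | 2 < (G.neighborSet x).ncard}) :
    indDomNum G = domNum G := by
  set S : Set ℕ := {n | ∃ A : Set V, IsDominatingSet G A ∧ A.ncard = n} with hS
  have hSne : S.Nonempty :=
    ⟨(Set.univ : Set V).ncard, Set.univ, fun v hv => (hv (Set.mem_univ v)).elim, rfl⟩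
  have hmem := Nat.sInf_mem hSne
  set T : Set ℕ := {b | ∃ A : Set V, IsDominatingSet G A ∧ A.ncard = sInf S ∧
    (badSet G A).ncard = b} with hT
  have hTne : T.Nonempty := by
    obtain ⟨A, hA, hAc⟩ := hmem
    exact ⟨(badSet G A).ncard, A, hA, hAc, rfl⟩
  obtain ⟨D, hDdom, hDcard, hDbad⟩ := Nat.sInf_mem hTne
  have hmin : ∀ A : Set V, IsDominatingSet G A → D.ncard ≤ A.ncard := by
    intro A hA
    rw [hDcard]
    exact Nat.sInf_le ⟨A, hA, rfl⟩
  have hbad : ∀ A : Set V, IsDominatingSet G A → A.ncard = D.ncard →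
      (badSet G D).ncard ≤ (badSet G A).ncard := by
    intro A hA hAc
    rw [hDbad]
    exact Nat.sInf_le ⟨A, hA, hDcard ▸ hAc, rfl⟩
  have hindep : IsIndepSet G D := by
    intro u hu v hv huv
    by_cases hdu : (G.neighborSet u).ncard ≤ 2
    · exact core G D hDdom hmin hbad u v hu hv huv hdu
    · have hdv : (G.neighborSet v).ncard ≤ 2 := by
        by_contra hdv
        exact hlong u (by simpa using Nat.lt_of_not_le hdu)
          v (by simpa using Nat.lt_of_not_le hdv) huv
      exact core G D hDdom hmin hbad v u hv hu huv.symm hdv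
  apply le_antisymm
  · exact Nat.sInf_le ⟨D, hDdom, hindep, hDcard⟩
  · obtain ⟨A, hA, _, hAc⟩ :=
      Nat.sInf_mem (⟨D.ncard, D, hDdom, hindep, rfl⟩ :
        Set.Nonempty {n | ∃ A : Set V, IsDominatingSet G A ∧ IsIndepSet G A ∧ A.ncard = n})
    exact Nat.sInf_le ⟨A, hA, hAc⟩
end
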